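/- Let n > 8. If τ satisfies gcd(τ, n) = 1 and σ_{τ,n}·(1,2,4) = (1,2,4), then τ ≡ 1 (mod n). Consequently the orbit of the cubic MRS function (1,2,4) under the action of G_n has exactly φ(n) elements, where φ is Euler's totient function. -/

import Mathlib

/-- Boolean functions in `n` variables, with variables indexed by `ZMod n`
(index `i : ZMod n` corresponds to the variable `x_{i+1}` in 1-indexed notation,
so that "`a Mod n`" arithmetic on subscripts becomes arithmetic in `ZMod n`). -/
abbrev BF (n : ℕ) := (ZMod n → ZMod 2) → ZMod 2

/-- The cubic MRS function `(1,j,k)` in `n` variables: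
`x ↦ Σ_{i=1}^n x_i x_{(i+j-1) Mod n} x_{(i+k-1) Mod n}`, the sum taken in `GF(2)`. -/
def cubicMRS (n : ℕ) [NeZero n] (j k : ℕ) : BF n :=
  fun x => ∑ i : ZMod n,
    x i * x (i + ((j - 1 : ℕ) : ZMod n)) * x (i + ((k - 1 : ℕ) : ZMod n))

/-- `C_n`: the set of all cubic MRS functions `(1,j,k)`, `1 < j < k ≤ n`, in `n` variables. -/
def cubicSet (n : ℕ) [NeZero n] : Set (BF n) :=
  {f | ∃ j k : ℕ, 1 < j ∧ j < k ∧ k ≤ n ∧ f = cubicMRS n j k}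

/-- The set of cubic MRS functions `(1,j,k)` with `1 < j, k ≤ n`, `j ≠ k`. -/
def cubicSetNe (n : ℕ) [NeZero n] : Set (BF n) :=
  {f | ∃ j k : ℕ, 1 < j ∧ j ≤ n ∧ 1 < k ∧ k ≤ n ∧ j ≠ k ∧ f = cubicMRS n j k}

/-- The action of a permutation `μ` of the variables on a Boolean function:
`(μ·f)(x₁,…,xₙ) = f(x_{μ(1)},…,x_{μ(n)})`. -/
def permAct {n : ℕ} (μ : Equiv.Perm (ZMod n)) (f : BF n) : BF n :=
  fun x => f (fun i => x (μ i))

/-- A Boolean function is rotation symmetric if it is invariant under the cyclic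
shift of the variables. -/
def rotSym {n : ℕ} (f : BF n) : Prop :=
  ∀ x : ZMod n → ZMod 2, f (fun i => x (i + 1)) = f x

/-- A permutation `μ` preserves rotation symmetry (for cubic MRS functions in `n`
variables) if `μ·f` is rotation symmetric for every cubic MRS function `f`. -/
def preservesRS (n : ℕ) [NeZero n] (μ : Equiv.Perm (ZMod n)) : Prop :=
  ∀ f ∈ cubicSetNe n, rotSym (permAct μ f)

/-- The permutation `σ_{τ,n} : i ↦ ((i-1)τ + 1) Mod n` of the variables, for `τ` a
unit mod `n`; in the 0-indexed coordinates used here it is `i ↦ τ·i` on `ZMod n`. -/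
def sigmaPerm {n : ℕ} (u : (ZMod n)ˣ) : Equiv.Perm (ZMod n) where
  toFun := fun i => (u : ZMod n) * i
  invFun := fun i => ((u⁻¹ : (ZMod n)ˣ) : ZMod n) * i
  left_inv := fun i => by simp [← mul_assoc]
  right_inv := fun i => by simp [← mul_assoc]

/-- The orbit of a Boolean function `f` under the action of the group
`G_n = {σ_{τ,n} : gcd(τ,n) = 1}`. -/
def orbit (n : ℕ) [NeZero n] (f : BF n) : Set (BF n) :=
  {g | ∃ u : (ZMod n)ˣ, g = permAct (sigmaPerm u) f}

/-- The set of orbits of the action of `G_n` on the set `C_n` of cubic MRS functions. -/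
def orbitsOn (n : ℕ) [NeZero n] : Set (Set (BF n)) :=
  {S | ∃ f ∈ cubicSet n, S = orbit n f}


private lemma mrs_key {n : ℕ} [NeZero n] (hn : 8 < n) (c : ZMod n) (hc : IsUnit c)
    (a : ZMod n) (h0 : a = 0 ∨ a = 1 ∨ a = 3)
    (h1 : a + c = 0 ∨ a + c = 1 ∨ a + c = 3)
    (h3 : a + 3*c = 0 ∨ a + 3*c = 1 ∨ a + 3*c = 3) : c = 1 := by
  haveI : Fact (1 < n) := ⟨by omega⟩
  obtain ⟨α, hα, ha⟩ : ∃ α : ℤ, (α = 0 ∨ α = 1 ∨ α = 3) ∧ a = (α : ZMod n) := by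
    rcases h0 with h|h|h
    · exact ⟨0, Or.inl rfl, by exact_mod_cast h⟩
    · exact ⟨1, Or.inr (Or.inl rfl), by exact_mod_cast h⟩
    · exact ⟨3, Or.inr (Or.inr rfl), by exact_mod_cast h⟩
  obtain ⟨β, hβ, hb⟩ : ∃ β : ℤ, (β = 0 ∨ β = 1 ∨ β = 3) ∧ a + c = (β : ZMod n) := by
    rcases h1 with h|h|h
    · exact ⟨0, Or.inl rfl, by exact_mod_cast h⟩
    · exact ⟨1, Or.inr (Or.inl rfl), by exact_mod_cast h⟩
    · exact ⟨3, Or.inr (Or.inr rfl), by exact_mod_cast h⟩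
  obtain ⟨γ, hγ, hg⟩ : ∃ γ : ℤ, (γ = 0 ∨ γ = 1 ∨ γ = 3) ∧ a + 3*c = (γ : ZMod n) := by
    rcases h3 with h|h|h
    · exact ⟨0, Or.inl rfl, by exact_mod_cast h⟩
    · exact ⟨1, Or.inr (Or.inl rfl), by exact_mod_cast h⟩
    · exact ⟨3, Or.inr (Or.inr rfl), by exact_mod_cast h⟩
  have hd : ((3*β - 2*α - γ : ℤ) : ZMod n) = 0 := by
    push_cast
    linear_combination (-3)*hb + 2*ha + hg
  rw [ZMod.intCast_zmod_eq_zero_iff_dvd] at hd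
  have hn9 : (9:ℤ) ≤ (n:ℤ) := by exact_mod_cast hn
  rcases eq_or_ne (3*β - 2*α - γ) 0 with h9 | h9
  · have hcase : β - α = 1 ∨ β = α := by omega
    rcases hcase with h | h
    · have hβα : (β : ZMod n) = (α : ZMod n) + 1 := by
        have hb1 : β = α + 1 := by omega
        rw [hb1]; push_cast; ring
      linear_combination hb - ha + hβα
    · exfalso
      have hc0 : c = 0 := by rw [h] at hb; linear_combination hb - ha
      rw [hc0] at hc
      exact zero_ne_one (isUnit_zero_iff.mp hc)
  · exfalso
    have hle : (n:ℤ) ≤ |3*β - 2*α - γ| :=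
      Int.le_of_dvd (abs_pos.mpr h9) ((dvd_abs _ _).mpr hd)
    have hcases := le_abs.mp hle
    have hga : γ = α := by omega
    have hc3 : 3 * c = 0 := by rw [hga] at hg; linear_combination hg - ha
    obtain ⟨w, rfl⟩ := hc
    have h30 : (3 : ZMod n) = 0 := by
      calc (3:ZMod n) = 3 * ↑w * ↑(w⁻¹) := by
            rw [mul_assoc, ← Units.val_mul, mul_inv_cancel, Units.val_one, mul_one]
        _ = 0 := by rw [hc3, zero_mul]
    have hdvd : n ∣ 3 := by
      have : ((3:ℕ) : ZMod n) = 0 := by exact_mod_cast h30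
      exact (ZMod.natCast_eq_zero_iff 3 n).mp this
    have := Nat.le_of_dvd (by norm_num) hdvd
    omega

private lemma mrs_cne {n : ℕ} [NeZero n] (hn : 8 < n) (a b : ℕ) (ha : a < 9) (hb : b < 9)
    (h : a ≠ b) : (a : ZMod n) ≠ (b : ZMod n) := by
  rw [Ne, ZMod.natCast_eq_natCast_iff, Nat.ModEq,
    Nat.mod_eq_of_lt (by omega), Nat.mod_eq_of_lt (by omega)]
  exact h

/-- The indicator function of `{0,1,3}`. -/
noncomputable def xT (n : ℕ) [NeZero n] : ZMod n → ZMod 2 :=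
  fun i => if i = 0 ∨ i = 1 ∨ i = 3 then 1 else 0

private lemma mrs_rhs_eval {n : ℕ} [NeZero n] (hn : 8 < n) : cubicMRS n 2 4 (xT n) = 1 := by
  have e21 : (2:ZMod n) ≠ 1 := by
    exact_mod_cast mrs_cne hn 2 1 (by norm_num) (by norm_num) (by norm_num)
  have e20 : (2:ZMod n) ≠ 0 := by
    exact_mod_cast mrs_cne hn 2 0 (by norm_num) (by norm_num) (by norm_num)
  have e23 : (2:ZMod n) ≠ 3 := by
    exact_mod_cast mrs_cne hn 2 3 (by norm_num) (by norm_num) (by norm_num)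
  have e60 : (6:ZMod n) ≠ 0 := by
    exact_mod_cast mrs_cne hn 6 0 (by norm_num) (by norm_num) (by norm_num)
  have e61 : (6:ZMod n) ≠ 1 := by
    exact_mod_cast mrs_cne hn 6 1 (by norm_num) (by norm_num) (by norm_num)
  have e63 : (6:ZMod n) ≠ 3 := by
    exact_mod_cast mrs_cne hn 6 3 (by norm_num) (by norm_num) (by norm_num)
  have ec1 : ((2 - 1 : ℕ) : ZMod n) = 1 := by norm_num
  have ec3 : ((4 - 1 : ℕ) : ZMod n) = 3 := by norm_num
  rw [cubicMRS]
  rw [Finset.sum_eq_single 0]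
  · rw [ec1, ec3, zero_add, zero_add]
    simp [xT]
  · intro b _ hb
    rw [ec1, ec3]
    by_cases h1 : b = 1
    · subst h1
      have : xT n (1 + 1) = 0 := by
        rw [show (1:ZMod n) + 1 = 2 by norm_num]
        simp [xT, e20, e21, e23]
      rw [this, mul_zero, zero_mul]
    by_cases h3 : b = 3
    · subst h3
      have : xT n (3 + 3) = 0 := by
        rw [show (3:ZMod n) + 3 = 6 by norm_num]
        simp [xT, e60, e61, e63]
      rw [this, mul_zero]
    · have : xT n b = 0 := by simp [xT, hb, h1, h3]
      rw [this, zero_mul, zero_mul]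
  · intro h; exact absurd (Finset.mem_univ 0) h

private lemma mrs_part1 (n : ℕ) [NeZero n] (hn : 8 < n) (τ : ℕ) (h : Nat.Coprime τ n)
    (heq : permAct (sigmaPerm (ZMod.unitOfCoprime τ h)) (cubicMRS n 2 4) = cubicMRS n 2 4) :
    τ ≡ 1 [MOD n] := by
  set u := ZMod.unitOfCoprime τ h with hu
  set c : ZMod n := (u : ZMod n) with hcdef
  have hev := congrFun heq (xT n)
  rw [mrs_rhs_eval hn] at hev
  have hL : ∑ i : ZMod n, xT n (c*i) * xT n (c*i + c) * xT n (c*i + 3*c) = 1 := by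
    rw [← hev]
    simp only [permAct, cubicMRS, sigmaPerm, Equiv.coe_fn_mk]
    apply Finset.sum_congr rfl
    intro i _
    have ec1 : ((2 - 1 : ℕ) : ZMod n) = 1 := by norm_num
    have ec3 : ((4 - 1 : ℕ) : ZMod n) = 3 := by norm_num
    rw [ec1, ec3]
    rw [hcdef]
    ring_nf
  obtain ⟨i, _, hi⟩ := Finset.exists_ne_zero_of_sum_ne_zero (by rw [hL]; exact one_ne_zero)
  have h0 : c*i = 0 ∨ c*i = 1 ∨ c*i = 3 := by
    by_contra hcon
    rw [xT, if_neg hcon, zero_mul, zero_mul] at hi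
    exact hi rfl
  have h1 : c*i + c = 0 ∨ c*i + c = 1 ∨ c*i + c = 3 := by
    by_contra hcon
    rw [show xT n (c*i+c) = 0 from if_neg hcon, mul_zero, zero_mul] at hi
    exact hi rfl
  have h3 : c*i + 3*c = 0 ∨ c*i + 3*c = 1 ∨ c*i + 3*c = 3 := by
    by_contra hcon
    rw [show xT n (c*i+3*c) = 0 from if_neg hcon, mul_zero] at hi
    exact hi rfl
  have hc1 : c = 1 := mrs_key hn c u.isUnit (c*i) h0 h1 h3
  have : (τ : ZMod n) = ((1:ℕ) : ZMod n) := by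
    rw [Nat.cast_one, ← ZMod.coe_unitOfCoprime τ h]
    exact hc1
  exact (ZMod.natCast_eq_natCast_iff _ _ _).mp this

private lemma mrs_permAct_comp {n : ℕ} (a b : (ZMod n)ˣ) (f : BF n) :
    permAct (sigmaPerm a) (permAct (sigmaPerm b) f) = permAct (sigmaPerm (a*b)) f := by
  funext x
  simp only [permAct, sigmaPerm, Equiv.coe_fn_mk]
  congr 1
  funext i
  rw [Units.val_mul, mul_assoc]

private lemma mrs_permAct_one {n : ℕ} (f : BF n) :
    permAct (sigmaPerm (1 : (ZMod n)ˣ)) f = f := by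
  funext x
  simp [permAct, sigmaPerm]

private lemma mrs_part2 (n : ℕ) [NeZero n] (hn : 8 < n) :
    (orbit n (cubicMRS n 2 4)).ncard = Nat.totient n := by
  set f := cubicMRS n 2 4 with hf
  have inj : Function.Injective (fun u : (ZMod n)ˣ => permAct (sigmaPerm u) f) := by
    intro u v huv
    simp only at huv
    have h1 : permAct (sigmaPerm (v⁻¹ * u)) f = f := by
      rw [← mrs_permAct_comp, huv, mrs_permAct_comp, inv_mul_cancel, mrs_permAct_one]
    set w := v⁻¹ * u with hw
    set τ := ((w : ZMod n)).val with hτ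
    have hcop : Nat.Coprime τ n := ZMod.val_coe_unit_coprime w
    have hcoe : ((ZMod.unitOfCoprime τ hcop : (ZMod n)ˣ) : ZMod n) = (w : ZMod n) := by
      rw [ZMod.coe_unitOfCoprime]
      exact ZMod.natCast_rightInverse _
    have hperm : sigmaPerm (ZMod.unitOfCoprime τ hcop) = sigmaPerm w := by
      apply Equiv.ext
      intro i
      show ((ZMod.unitOfCoprime τ hcop : (ZMod n)ˣ) : ZMod n) * i = (w : ZMod n) * i
      rw [hcoe]
    have hmod : τ ≡ 1 [MOD n] := by
      apply mrs_part1 n hn τ hcop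
      rw [hperm]
      exact h1
    have : (τ : ZMod n) = 1 := by
      have := (ZMod.natCast_eq_natCast_iff τ 1 n).mpr hmod
      simpa using this
    have hw1 : (w : ZMod n) = 1 := by
      rw [← hcoe, ZMod.coe_unitOfCoprime]
      exact this
    have : w = 1 := Units.ext hw1
    exact (inv_mul_eq_one.mp this).symm
  have horb : orbit n f = (fun u : (ZMod n)ˣ => permAct (sigmaPerm u) f) '' Set.univ := by
    rw [Set.image_univ]
    ext g
    simp [orbit, Set.range, eq_comm]
  rw [horb, Set.ncard_image_of_injective _ inj, Set.ncard_univ, Nat.card_eq_fintype_card,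
    ZMod.card_units_eq_totient]

/-- For `n > 8`: if `gcd(τ,n) = 1` and `σ_{τ,n}` fixes the cubic MRS function `(1,2,4)`,
then `τ ≡ 1 (mod n)`; consequently the orbit of `(1,2,4)` under the action of `G_n` has
exactly `φ(n)` elements. -/
theorem stabilizer_of_124_trivial (n : ℕ) [NeZero n] (hn : 8 < n) :
    (∀ (τ : ℕ) (h : Nat.Coprime τ n),
      permAct (sigmaPerm (ZMod.unitOfCoprime τ h)) (cubicMRS n 2 4) = cubicMRS n 2 4 →
        τ ≡ 1 [MOD n]) ∧
    (orbit n (cubicMRS n 2 4)).ncard = Nat.totient n := by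
  exact ⟨fun τ h heq => mrs_part1 n hn τ h heq, mrs_part2 n hn⟩
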